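/- Let θ_{00}, θ_{10}, θ_{01}, θ_{11} > 0 and let π_{00}, π_{10}, π_{01}, π_{11} ≥ 0 with π_{00}+π_{10}+π_{01}+π_{11} = 1, and let C be the corresponding four-component mixture of rotated bivariate Clayton copulas. Then the one-sided limit as ν → 0⁺ of (ν − C(1−ν,ν))/ν equals π_{10}·2^{-1/θ_{10}}; i.e., the upper-lower tail dependence coefficient of the mixture is λ_{10}(C) = π_{10}·2^{-1/θ_{10}}. -/

import Mathlib

open Filter Set

private lemma aux_factor (θ ν w : ℝ) (hθ : 0 < θ) (hν : 0 < ν) (hw : 0 ≤ 1 + w * ν ^ θ) :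
    (ν ^ (-θ) + w) ^ (-1/θ) = ν * (1 + w * ν ^ θ) ^ (-1/θ) := by
  have hνθ : ν ^ (-θ) * ν ^ θ = 1 := by
    rw [← Real.rpow_add hν]; simp
  have h1 : ν ^ (-θ) + w = ν ^ (-θ) * (1 + w * ν ^ θ) := by
    rw [mul_add, mul_one]
    rw [show ν ^ (-θ) * (w * ν ^ θ) = w * (ν ^ (-θ) * ν ^ θ) by ring, hνθ, mul_one]
  rw [h1, Real.mul_rpow (Real.rpow_nonneg hν.le _) hw]
  congr 1
  rw [← Real.rpow_mul hν.le]
  rw [show -θ * (-1/θ) = 1 by field_simp, Real.rpow_one]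

private lemma lim_a (θ : ℝ) (hθ : 0 < θ) :
    Tendsto (fun ν : ℝ => (1 + ((1-ν) ^ (-θ) - 1) * ν ^ θ) ^ (-1/θ))
      (nhdsWithin 0 (Ioo (0:ℝ) 1)) (nhds 1) := by
  have h1 : Tendsto (fun ν : ℝ => (1-ν) ^ (-θ)) (nhdsWithin 0 (Ioo (0:ℝ) 1)) (nhds 1) := by
    have hc : ContinuousAt (fun ν : ℝ => (1-ν) ^ (-θ)) 0 := by
      apply ContinuousAt.rpow_const (by fun_prop)
      left; norm_num
    simpa [Real.one_rpow] using hc.tendsto.mono_left nhdsWithin_le_nhds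
  have h2 : Tendsto (fun ν : ℝ => ν ^ θ) (nhdsWithin 0 (Ioo (0:ℝ) 1)) (nhds 0) := by
    have hc : ContinuousAt (fun ν : ℝ => ν ^ θ) 0 := Real.continuousAt_rpow_const 0 θ (Or.inr hθ.le)
    simpa [Real.zero_rpow hθ.ne'] using hc.tendsto.mono_left nhdsWithin_le_nhds
  have h3 : Tendsto (fun ν : ℝ => 1 + ((1-ν) ^ (-θ) - 1) * ν ^ θ)
      (nhdsWithin 0 (Ioo (0:ℝ) 1)) (nhds (1 + (1-1)*0)) :=
    tendsto_const_nhds.add ((h1.sub tendsto_const_nhds).mul h2)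
  have h4 : ContinuousAt (fun x : ℝ => x ^ (-1/θ)) 1 :=
    Real.continuousAt_rpow_const 1 (-1/θ) (Or.inl one_ne_zero)
  have h5 := h4.tendsto.comp (by simpa using h3)
  simpa [Function.comp_def, Real.one_rpow] using h5

private lemma lim_b (θ : ℝ) (hθ : 0 < θ) :
    Tendsto (fun ν : ℝ => (2 - ν ^ θ) ^ (-1/θ))
      (nhdsWithin 0 (Ioo (0:ℝ) 1)) (nhds ((2:ℝ) ^ (-1/θ))) := by
  have h2 : Tendsto (fun ν : ℝ => ν ^ θ) (nhdsWithin 0 (Ioo (0:ℝ) 1)) (nhds 0) := by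
    have hc : ContinuousAt (fun ν : ℝ => ν ^ θ) 0 := Real.continuousAt_rpow_const 0 θ (Or.inr hθ.le)
    simpa [Real.zero_rpow hθ.ne'] using hc.tendsto.mono_left nhdsWithin_le_nhds
  have h3 : Tendsto (fun ν : ℝ => 2 - ν ^ θ) (nhdsWithin 0 (Ioo (0:ℝ) 1)) (nhds (2 - 0)) :=
    tendsto_const_nhds.sub h2
  have h4 : ContinuousAt (fun x : ℝ => x ^ (-1/θ)) 2 :=
    Real.continuousAt_rpow_const 2 (-1/θ) (Or.inl two_ne_zero)
  have h5 := h4.tendsto.comp (by simpa using h3)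
  simpa [Function.comp_def] using h5

private lemma lim_c (θ : ℝ) (hθ : 0 < θ) :
    Tendsto (fun ν : ℝ =>
        (ν - ((1-ν) - ((1-ν) ^ (-θ) + (1-ν) ^ (-θ) - 1) ^ (-1/θ))) / ν)
      (nhdsWithin 0 (Ioo (0:ℝ) 1)) (nhds 0) := by
  set H : ℝ → ℝ := fun ν => ν - ((1-ν) - ((1-ν) ^ (-θ) + (1-ν) ^ (-θ) - 1) ^ (-1/θ)) with hH
  have hA : HasDerivAt (fun ν : ℝ => 1 - ν) (-1) 0 := by
    simpa using (hasDerivAt_id (0:ℝ)).const_sub 1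
  have hB : HasDerivAt (fun ν : ℝ => (1-ν) ^ (-θ)) θ 0 := by
    have := hA.rpow_const (p := -θ) (Or.inl (by norm_num))
    norm_num [Real.one_rpow] at this
    convert this using 1
  have hInner : HasDerivAt (fun ν : ℝ => (1-ν) ^ (-θ) + (1-ν) ^ (-θ) - 1) (θ + θ) 0 := by
    simpa using (hB.add hB).sub_const 1
  have hval : ((1:ℝ)-0) ^ (-θ) + (1-(0:ℝ)) ^ (-θ) - 1 = 1 := by
    norm_num [Real.one_rpow]
  have hOuter : HasDerivAt (fun ν : ℝ => ((1-ν) ^ (-θ) + (1-ν) ^ (-θ) - 1) ^ (-1/θ)) (-2) 0 := by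
    have := hInner.rpow_const (p := -1/θ) (Or.inl (by rw [hval]; norm_num))
    rw [hval] at this
    have h2 : (θ + θ) * (-1/θ) * (1:ℝ) ^ (-1/θ - 1) = -2 := by
      rw [Real.one_rpow]; field_simp; ring
    rwa [h2] at this
  have hF : HasDerivAt H 0 0 := by
    have := (hasDerivAt_id (0:ℝ)).sub (hA.sub hOuter)
    norm_num at this
    exact this
  have hslope := hasDerivAt_iff_tendsto_slope.mp hF
  have hmono : nhdsWithin (0:ℝ) (Ioo 0 1) ≤ nhdsWithin 0 {(0:ℝ)}ᶜ :=
    nhdsWithin_mono 0 (fun x hx => ne_of_gt hx.1)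
  have := hslope.mono_left hmono
  refine this.congr' ?_
  filter_upwards [self_mem_nhdsWithin] with ν hν
  have hH0 : H 0 = 0 := by
    simp [hH, hval]
  simp [slope_def_field, hH0]; rfl
theorem mixture_upper_lower_tail_dependence (θ00 θ10 θ01 θ11 : ℝ)
    (hθ00 : 0 < θ00) (hθ10 : 0 < θ10) (hθ01 : 0 < θ01) (hθ11 : 0 < θ11)
    (π00 π10 π01 π11 : ℝ)
    (hπ00 : 0 ≤ π00) (hπ10 : 0 ≤ π10) (hπ01 : 0 ≤ π01) (hπ11 : 0 ≤ π11)
    (hsum : π00 + π10 + π01 + π11 = 1)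
    (C : ℝ → ℝ → ℝ)
    (hC : ∀ u ∈ Ioo (0 : ℝ) 1, ∀ v ∈ Ioo (0 : ℝ) 1,
      C u v =
        π00 * ((u ^ (-θ00) + v ^ (-θ00) - 1) ^ (-1 / θ00))
        + π10 * (v - ((1 - u) ^ (-θ10) + v ^ (-θ10) - 1) ^ (-1 / θ10))
        + π01 * (u - (u ^ (-θ01) + (1 - v) ^ (-θ01) - 1) ^ (-1 / θ01))
        + π11 * (u + v - 1 + ((1 - u) ^ (-θ11) + (1 - v) ^ (-θ11) - 1) ^ (-1 / θ11))) :
    Tendsto (fun ν : ℝ => (ν - C (1 - ν) ν) / ν)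
      (nhdsWithin 0 (Ioo (0 : ℝ) 1)) (nhds (π10 * (2 : ℝ) ^ (-1 / θ10))) := by
  set l := nhdsWithin (0:ℝ) (Ioo (0:ℝ) 1) with hl
  set G : ℝ → ℝ := fun ν =>
    (π00 * (1 - (1 + ((1-ν) ^ (-θ00) - 1) * ν ^ θ00) ^ (-1/θ00))
      + π10 * (2 - ν ^ θ10) ^ (-1/θ10)
      + π11 * (1 - (1 + ((1-ν) ^ (-θ11) - 1) * ν ^ θ11) ^ (-1/θ11)))
    + π01 * ((ν - ((1-ν) - ((1-ν) ^ (-θ01) + (1-ν) ^ (-θ01) - 1) ^ (-1/θ01))) / ν)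
    with hG
  have heq : ∀ᶠ ν in l, (ν - C (1 - ν) ν) / ν = G ν := by
    filter_upwards [self_mem_nhdsWithin] with ν hν
    obtain ⟨hν0, hν1⟩ := hν
    have h1ν : (0:ℝ) < 1 - ν := by linarith
    have hu : (1-ν) ∈ Ioo (0:ℝ) 1 := ⟨h1ν, by linarith⟩
    have hνmem : ν ∈ Ioo (0:ℝ) 1 := ⟨hν0, hν1⟩
    rw [hC _ hu _ hνmem, show (1:ℝ) - (1 - ν) = ν by ring]
    have hone00 : (1:ℝ) ≤ (1-ν) ^ (-θ00) :=
      Real.one_le_rpow_of_pos_of_le_one_of_nonpos h1ν (by linarith) (by linarith)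
    have hone11 : (1:ℝ) ≤ (1-ν) ^ (-θ11) :=
      Real.one_le_rpow_of_pos_of_le_one_of_nonpos h1ν (by linarith) (by linarith)
    have e00 : ((1-ν) ^ (-θ00) + ν ^ (-θ00) - 1) ^ (-1/θ00)
        = ν * (1 + ((1-ν) ^ (-θ00) - 1) * ν ^ θ00) ^ (-1/θ00) := by
      rw [show (1-ν) ^ (-θ00) + ν ^ (-θ00) - 1 = ν ^ (-θ00) + ((1-ν) ^ (-θ00) - 1) by ring]
      exact aux_factor θ00 ν _ hθ00 hν0
        (by nlinarith [Real.rpow_nonneg hν0.le θ00])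
    have e11 : (ν ^ (-θ11) + (1-ν) ^ (-θ11) - 1) ^ (-1/θ11)
        = ν * (1 + ((1-ν) ^ (-θ11) - 1) * ν ^ θ11) ^ (-1/θ11) := by
      rw [show ν ^ (-θ11) + (1-ν) ^ (-θ11) - 1 = ν ^ (-θ11) + ((1-ν) ^ (-θ11) - 1) by ring]
      exact aux_factor θ11 ν _ hθ11 hν0
        (by nlinarith [Real.rpow_nonneg hν0.le θ11])
    have e10 : (ν ^ (-θ10) + ν ^ (-θ10) - 1) ^ (-1/θ10)
        = ν * (2 - ν ^ θ10) ^ (-1/θ10) := by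
      have hνθ : ν ^ (-θ10) * ν ^ θ10 = 1 := by rw [← Real.rpow_add hν0]; simp
      have hle : ν ^ θ10 ≤ 1 := Real.rpow_le_one hν0.le hν1.le hθ10.le
      have h := aux_factor θ10 ν (ν ^ (-θ10) - 1) hθ10 hν0
        (by nlinarith [Real.rpow_nonneg hν0.le θ10])
      rw [show ν ^ (-θ10) + ν ^ (-θ10) - 1 = ν ^ (-θ10) + (ν ^ (-θ10) - 1) by ring, h,
        show 1 + (ν ^ (-θ10) - 1) * ν ^ θ10 = 2 - ν ^ θ10 by linear_combination hνθ]
    rw [e00, e10, e11]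
    have hkey : ν - (π00 * (ν * (1 + ((1-ν) ^ (-θ00) - 1) * ν ^ θ00) ^ (-1/θ00))
        + π10 * (ν - ν * (2 - ν ^ θ10) ^ (-1/θ10))
        + π01 * ((1-ν) - ((1-ν) ^ (-θ01) + (1-ν) ^ (-θ01) - 1) ^ (-1/θ01))
        + π11 * ((1-ν) + ν - 1 + ν * (1 + ((1-ν) ^ (-θ11) - 1) * ν ^ θ11) ^ (-1/θ11)))
        = ν * (π00 * (1 - (1 + ((1-ν) ^ (-θ00) - 1) * ν ^ θ00) ^ (-1/θ00))
            + π10 * (2 - ν ^ θ10) ^ (-1/θ10)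
            + π11 * (1 - (1 + ((1-ν) ^ (-θ11) - 1) * ν ^ θ11) ^ (-1/θ11)))
          + π01 * (ν - ((1-ν) - ((1-ν) ^ (-θ01) + (1-ν) ^ (-θ01) - 1) ^ (-1/θ01))) := by
      linear_combination (-ν) * hsum
    rw [hkey, hG]
    rw [add_div, mul_div_cancel_left₀ _ hν0.ne', mul_div_assoc]
  have hLim : Tendsto G l (nhds ((π00 * (1 - 1) + π10 * ((2:ℝ) ^ (-1/θ10)) + π11 * (1 - 1))
      + π01 * 0)) := by
    refine Tendsto.add ?_ ((lim_c θ01 hθ01).const_mul π01)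
    refine Tendsto.add (Tendsto.add ?_ ?_) ?_
    · exact (tendsto_const_nhds.sub (lim_a θ00 hθ00)).const_mul π00
    · exact (lim_b θ10 hθ10).const_mul π10
    · exact (tendsto_const_nhds.sub (lim_a θ11 hθ11)).const_mul π11
  have hval : (π00 * (1 - 1) + π10 * ((2:ℝ) ^ (-1/θ10)) + π11 * (1 - 1)) + π01 * 0
      = π10 * (2:ℝ) ^ (-1/θ10) := by ring
  rw [hval] at hLim
  exact hLim.congr' (Filter.EventuallyEq.symm heq)
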